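/- Let N ≥ 1, let u : ℝ^N → [0,∞) be measurable, and let H ⊂ ℝ^N be a closed halfspace. Then for every λ ∈ ℝ, the superlevel sets {x : u^H(x) > λ} and {x : u(x) > λ} have the same Lebesgue measure. Consequently, for every 1 ≤ p < ∞, if u ∈ L^p(ℝ^N) then u^H ∈ L^p(ℝ^N) and ∫_{ℝ^N} |u^H|^p = ∫_{ℝ^N} |u|^p. -/

import Mathlib

open MeasureTheory Filter

/-- Reflection across the boundary hyperplane `{x : ⟪a,x⟫ = b}` of the closed
halfspace `H = {x : ⟪a,x⟫ ≤ b}` (for `‖a‖ = 1`). -/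
noncomputable def reflectH {N : ℕ} (a : EuclideanSpace ℝ (Fin N)) (b : ℝ)
    (x : EuclideanSpace ℝ (Fin N)) : EuclideanSpace ℝ (Fin N) :=
  x - (2 * ((inner ℝ a x : ℝ) - b)) • a

/-- Polarization (two-point rearrangement) of `u` with respect to the closed halfspace
`H = {x : ⟪a,x⟫ ≤ b}` (for `‖a‖ = 1`). -/
noncomputable def polarization {N : ℕ} (a : EuclideanSpace ℝ (Fin N)) (b : ℝ)
    (u : EuclideanSpace ℝ (Fin N) → ℝ) (x : EuclideanSpace ℝ (Fin N)) : ℝ :=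
  if (inner ℝ a x : ℝ) ≤ b then max (u x) (u (reflectH a b x))
  else min (u x) (u (reflectH a b x))

lemma inner_reflectH {N : ℕ} (a : EuclideanSpace ℝ (Fin N)) (b : ℝ) (ha : ‖a‖ = 1)
    (x : EuclideanSpace ℝ (Fin N)) :
    (inner ℝ a (reflectH a b x) : ℝ) = 2 * b - inner ℝ a x := by
  have h : (inner ℝ a a : ℝ) = 1 := by
    rw [real_inner_self_eq_norm_sq, ha]; norm_num
  rw [reflectH, inner_sub_right, real_inner_smul_right, h]
  ring

lemma reflectH_invol {N : ℕ} (a : EuclideanSpace ℝ (Fin N)) (b : ℝ) (ha : ‖a‖ = 1)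
    (x : EuclideanSpace ℝ (Fin N)) :
    reflectH a b (reflectH a b x) = x := by
  have h := inner_reflectH a b ha x
  simp only [reflectH] at *
  rw [h]
  module

lemma reflectH_eq_comp {N : ℕ} (a : EuclideanSpace ℝ (Fin N)) (b : ℝ) (ha : ‖a‖ = 1)
    (x : EuclideanSpace ℝ (Fin N)) :
    reflectH a b x = ((ℝ ∙ a)ᗮ.reflection) x + (2 * b) • a := by
  rw [Submodule.reflection_orthogonal_apply, Submodule.reflection_singleton_apply]
  have : (‖a‖ : ℝ) ^ 2 = 1 := by rw [ha]; norm_num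
  simp [reflectH, this, two_smul]
  module

lemma measurePreserving_reflectH {N : ℕ} (a : EuclideanSpace ℝ (Fin N)) (b : ℝ) (ha : ‖a‖ = 1) :
    MeasurePreserving (reflectH a b) volume volume := by
  have h1 : MeasurePreserving
      ((ℝ ∙ a)ᗮ.reflection : EuclideanSpace ℝ (Fin N) → EuclideanSpace ℝ (Fin N))
      volume volume :=
    ((ℝ ∙ a)ᗮ.reflection).measurePreserving
  have h2 := (measurePreserving_add_right (volume : Measure (EuclideanSpace ℝ (Fin N)))
    ((2 * b) • a)).comp h1
  convert h2 using 1
  funext x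
  exact reflectH_eq_comp a b ha x

lemma measurable_reflectH {N : ℕ} (a : EuclideanSpace ℝ (Fin N)) (b : ℝ) :
    Measurable (reflectH a b) := by
  have hci : Continuous fun x : EuclideanSpace ℝ (Fin N) => (inner ℝ a x : ℝ) :=
    continuous_const.inner continuous_id
  have : Continuous (reflectH a b) :=
    continuous_id.sub (((continuous_const.mul (hci.sub continuous_const))).smul continuous_const)
  exact this.measurable

lemma measurable_polarization {N : ℕ} (a : EuclideanSpace ℝ (Fin N)) (b : ℝ)
    {u : EuclideanSpace ℝ (Fin N) → ℝ} (hm : Measurable u) :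
    Measurable (polarization a b u) := by
  have hσ := measurable_reflectH a b
  have hs : MeasurableSet {x : EuclideanSpace ℝ (Fin N) | (inner ℝ a x : ℝ) ≤ b} := by
    have hci : Continuous fun x : EuclideanSpace ℝ (Fin N) => (inner ℝ a x : ℝ) :=
      continuous_const.inner continuous_id
    exact measurableSet_le hci.measurable measurable_const
  exact Measurable.ite hs (hm.max (hm.comp hσ)) (hm.min (hm.comp hσ))

lemma key_sum {N : ℕ} (a : EuclideanSpace ℝ (Fin N)) (b : ℝ) (ha : ‖a‖ = 1)
    (u : EuclideanSpace ℝ (Fin N) → ℝ) (F : ℝ → ENNReal) (x : EuclideanSpace ℝ (Fin N)) :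
    F (polarization a b u x) + F (polarization a b u (reflectH a b x))
      = F (u x) + F (u (reflectH a b x)) := by
  have hinv := reflectH_invol a b ha x
  have hinner := inner_reflectH a b ha x
  simp only [polarization, hinv, hinner]
  by_cases h : (inner ℝ a x : ℝ) ≤ b
  · by_cases h' : 2 * b - (inner ℝ a x : ℝ) ≤ b
    · have hb : (inner ℝ a x : ℝ) = b := le_antisymm h (by linarith)
      have hx : reflectH a b x = x := by
        simp [reflectH, hb]
      rw [if_pos h, if_pos h', hx]
      simp
    · rw [if_pos h, if_neg h']
      rcases le_total (u x) (u (reflectH a b x)) with hst | hst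
      · rw [max_eq_right hst, min_eq_right hst, add_comm]
      · rw [max_eq_left hst, min_eq_left hst]
  · by_cases h' : 2 * b - (inner ℝ a x : ℝ) ≤ b
    · rw [if_neg h, if_pos h']
      rcases le_total (u x) (u (reflectH a b x)) with hst | hst
      · rw [min_eq_left hst, max_eq_left hst]
      · rw [min_eq_right hst, max_eq_right hst, add_comm]
    · exfalso; push_neg at h h'; linarith

lemma key_lintegral {N : ℕ} (a : EuclideanSpace ℝ (Fin N)) (b : ℝ) (ha : ‖a‖ = 1)
    {u : EuclideanSpace ℝ (Fin N) → ℝ} (hm : Measurable u)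
    {F : ℝ → ENNReal} (hF : Measurable F) :
    ∫⁻ x, F (polarization a b u x) = ∫⁻ x, F (u x) := by
  have hσ := measurePreserving_reflectH a b ha
  have hP := measurable_polarization a b hm
  have h1 : ∫⁻ x, F (polarization a b u (reflectH a b x)) = ∫⁻ x, F (polarization a b u x) :=
    hσ.lintegral_comp (hF.comp hP)
  have h2 : ∫⁻ x, F (u (reflectH a b x)) = ∫⁻ x, F (u x) :=
    hσ.lintegral_comp (hF.comp hm)
  have hc1 : Measurable fun x : EuclideanSpace ℝ (Fin N) => F (polarization a b u x) :=
    hF.comp hP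
  have hc2 : Measurable fun x : EuclideanSpace ℝ (Fin N) => F (u x) := hF.comp hm
  have h3 : ∫⁻ x, (F (polarization a b u x) + F (polarization a b u (reflectH a b x)))
      = ∫⁻ x, (F (u x) + F (u (reflectH a b x))) :=
    lintegral_congr fun x => key_sum a b ha u F x
  rw [lintegral_add_left hc1, lintegral_add_left hc2, h1, h2,
    ← two_mul, ← two_mul] at h3
  exact (ENNReal.mul_right_inj (by norm_num) (by norm_num)).mp h3

/-- For a measurable nonnegative `u : ℝ^N → [0,∞)` and a closed halfspace
`H = {x : ⟪a,x⟫ ≤ b}`, the superlevel sets of `u^H` and `u` have the same Lebesgue measure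
for every level `l`; consequently, for every `1 ≤ p < ∞`, if `u ∈ L^p` then `u^H ∈ L^p` with
`∫ |u^H|^p = ∫ |u|^p`. -/
theorem statement12 {N : ℕ} (hN : 1 ≤ N)
    (u : EuclideanSpace ℝ (Fin N) → ℝ) (hm : Measurable u) (hu0 : ∀ x, 0 ≤ u x)
    (a : EuclideanSpace ℝ (Fin N)) (b : ℝ) (ha : ‖a‖ = 1) :
    (∀ l : ℝ, volume {x | l < polarization a b u x} = volume {x | l < u x}) ∧
      ∀ p : ℝ, 1 ≤ p → MemLp u (ENNReal.ofReal p) volume →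
        MemLp (polarization a b u) (ENNReal.ofReal p) volume ∧
          ∫ x, |polarization a b u x| ^ p = ∫ x, |u x| ^ p := by
  have hP := measurable_polarization a b hm
  constructor
  · intro l
    have hs1 : MeasurableSet {x | l < polarization a b u x} :=
      measurableSet_lt measurable_const hP
    have hs2 : MeasurableSet {x | l < u x} := measurableSet_lt measurable_const hm
    have hF : Measurable ((Set.Ioi l).indicator (fun _ => (1 : ENNReal))) :=
      measurable_const.indicator measurableSet_Ioi
    have key := key_lintegral a b ha hm hF
    have g1 : ∫⁻ x, {x | l < polarization a b u x}.indicator 1 x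
        = ∫⁻ x, (Set.Ioi l).indicator (fun _ => (1 : ENNReal)) (polarization a b u x) :=
      lintegral_congr fun x => by
        by_cases hx : l < polarization a b u x <;> simp [Set.indicator_apply, hx]
    have g2 : ∫⁻ x, {x | l < u x}.indicator 1 x
        = ∫⁻ x, (Set.Ioi l).indicator (fun _ => (1 : ENNReal)) (u x) :=
      lintegral_congr fun x => by
        by_cases hx : l < u x <;> simp [Set.indicator_apply, hx]
    rw [← lintegral_indicator_one hs1, ← lintegral_indicator_one hs2, g1, g2]
    exact key
  · intro p hp hLp
    have hp0 : 0 < p := by linarith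
    have hq0 : ENNReal.ofReal p ≠ 0 := by
      simp only [ne_eq, ENNReal.ofReal_eq_zero, not_le]
      exact hp0
    have hqt : ENNReal.ofReal p ≠ ⊤ := ENNReal.ofReal_ne_top
    have hqtr : (ENNReal.ofReal p).toReal = p := ENNReal.toReal_ofReal hp0.le
    have hFm : Measurable fun t : ℝ => ((‖t‖ₑ : ENNReal)) ^ p :=
      (measurable_enorm).pow_const p
    have keyn := key_lintegral a b ha hm hFm
    have hsnorm : eLpNorm (polarization a b u) (ENNReal.ofReal p) volume
        = eLpNorm u (ENNReal.ofReal p) volume := by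
      rw [eLpNorm_eq_lintegral_rpow_enorm_toReal hq0 hqt, eLpNorm_eq_lintegral_rpow_enorm_toReal hq0 hqt,
        hqtr, keyn]
    refine ⟨⟨hP.aestronglyMeasurable, by rw [hsnorm]; exact hLp.2⟩, ?_⟩
    have hm1 : Measurable fun x => |polarization a b u x| ^ p := hP.abs.pow_const p
    have hm2 : Measurable fun x => |u x| ^ p := hm.abs.pow_const p
    have hn1 : 0 ≤ᵐ[volume] fun x => |polarization a b u x| ^ p :=
      Filter.Eventually.of_forall fun x => Real.rpow_nonneg (abs_nonneg _) p
    have hn2 : 0 ≤ᵐ[volume] fun x => |u x| ^ p :=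
      Filter.Eventually.of_forall fun x => Real.rpow_nonneg (abs_nonneg _) p
    rw [integral_eq_lintegral_of_nonneg_ae hn1 hm1.aestronglyMeasurable,
      integral_eq_lintegral_of_nonneg_ae hn2 hm2.aestronglyMeasurable]
    congr 1
    have hFm2 : Measurable fun t : ℝ => ENNReal.ofReal (|t| ^ p) :=
      ENNReal.measurable_ofReal.comp (measurable_abs.pow_const p)
    exact key_lintegral a b ha hm hFm2
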